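/- Fix c > 0 and integer i ≥ 1, and let ζ be the unique solution on {i, i+1, ...} of the recursion (α_n + β_n)ζ(n) − α_n ζ(n−1) − β_n ζ(n+1) = 1 for n > i with ζ(i) = 0 given by the standard birth-death first-passage formula, where α_n = n(n−1)/2 and β_n = 2cn. Then ζ(n) = 2∑_{k=i}^{n-1} ∑_{j=0}^∞ (4c)^j/(k)_{j+2} for all n ≥ i+1. -/

import Mathlib

lemma prodA_ne (i : ℕ) (hi : 1 ≤ i) (N : ℕ) :
    (∏ t ∈ Finset.range N, ((i + t : ℕ) : ℝ)) ≠ 0 := by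
  apply Finset.prod_ne_zero_iff.2
  intro t _
  have : 0 < i + t := by omega
  positivity

lemma prodP (c : ℝ) (hc : 0 < c) (i : ℕ) (hi : 1 ≤ i) (d : ℕ) :
    (∏ k ∈ Finset.Icc (i+1) (i+d+1), ((k:ℝ)*((k:ℝ)-1)/2) / (2*c*k))
      = (∏ t ∈ Finset.range (d+1), ((i + t : ℕ) : ℝ)) / (4*c)^(d+1) := by
  have h1 : Finset.Icc (i+1) (i+d+1) = Finset.Ico (i+1) (i+d+2) := by
    rw [← Finset.Ico_add_one_right_eq_Icc]
    rfl
  rw [h1, Finset.prod_Ico_eq_prod_range]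
  have h2 : i + d + 2 - (i+1) = d + 1 := by omega
  rw [h2]
  have hpt : ∀ t ∈ Finset.range (d+1),
      (((i+1+t : ℕ):ℝ)*(((i+1+t : ℕ):ℝ)-1)/2) / (2*c*((i+1+t : ℕ):ℝ))
        = ((i + t : ℕ) : ℝ) / (4*c) := by
    intro t _
    have hk : ((i+1+t : ℕ) : ℝ) ≠ 0 := by
      have : 0 < i + 1 + t := by omega
      positivity
    have hc' : c ≠ 0 := ne_of_gt hc
    field_simp
    push_cast
    ring
  rw [Finset.prod_congr rfl hpt, Finset.prod_div_distrib, Finset.prod_const,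
    Finset.card_range]

lemma aux (c : ℝ) (hc : 0 < c) (i : ℕ) (hi : 1 ≤ i) (d l : ℕ) :
    (∏ k ∈ Finset.Icc (i+1) (i+d+1), ((k:ℝ)*((k:ℝ)-1)/2) / (2*c*k)) *
      (2 * (4*c)^(d+1+l) / ∏ t ∈ Finset.range (d+1+l+2), ((i + t : ℕ) : ℝ))
    = 2 * ((4*c)^l / ∏ m ∈ Finset.range (l+2), ((i+d+1 + m : ℕ) : ℝ)) := by
  rw [prodP c hc i hi d]
  have hsplit : (∏ t ∈ Finset.range (d+1+l+2), ((i + t : ℕ) : ℝ))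
      = (∏ t ∈ Finset.range (d+1), ((i + t : ℕ) : ℝ))
        * ∏ m ∈ Finset.range (l+2), ((i+d+1 + m : ℕ) : ℝ) := by
    have he : d+1+l+2 = (d+1)+(l+2) := by omega
    rw [he, Finset.prod_range_add]
    congr 1
    apply Finset.prod_congr rfl
    intro m _
    congr 1
    omega
  rw [hsplit]
  have hA := prodA_ne i hi (d+1)
  have hR : (∏ m ∈ Finset.range (l+2), ((i+d+1 + m : ℕ) : ℝ)) ≠ 0 := by
    apply Finset.prod_ne_zero_iff.2
    intro m _
    have : 0 < i + d + 1 + m := by omega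
    positivity
  have hc4 : (4*c) ≠ 0 := by positivity
  have he2 : d+1+l = (d+1)+l := by omega
  rw [he2, pow_add]
  field_simp
  ring

lemma key (c : ℝ) (hc : 0 < c) (i : ℕ) (hi : 1 ≤ i) (j : ℕ) (hj : i ≤ j) :
    (∏ k ∈ Finset.Icc (i+1) (j+1), ((k:ℝ)*((k:ℝ)-1)/2) / (2*c*k)) *
      ∑' l : ℕ, 2 * (4*c)^(j+1+l-i) / ∏ t ∈ Finset.range (j+1+l-i+2), ((i + t : ℕ) : ℝ)
    = 2 * ∑' l : ℕ, (4*c)^l / ∏ m ∈ Finset.range (l+2), ((j+1 + m : ℕ) : ℝ) := by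
  obtain ⟨d, rfl⟩ := Nat.exists_eq_add_of_le hj
  rw [← tsum_mul_left, ← tsum_mul_left]
  apply tsum_congr
  intro l
  have he : i + d + 1 + l - i = d + 1 + l := by omega
  rw [he]
  exact aux c hc i hi d l



/-- For `c > 0`, `i ≥ 1`, the standard birth-death first-passage formula
`ζ(n) = ∑_{m=i}^∞ γ_m + ∑_{j=i}^{n-2} (∏_{k=i+1}^{j+1} α_k/β_k) ∑_{l=j+1}^∞ γ_l`,
with `α_k = k(k-1)/2`, `β_k = 2ck`, `γ_m = 2(4c)^{m-i}/((i)_{m-i+2})`, equals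
`2∑_{k=i}^{n-1} ∑_{j=0}^∞ (4c)^j/(k)_{j+2}` for all `n ≥ i+1`. -/
theorem stmt8 (c : ℝ) (hc : 0 < c) (i : ℕ) (hi : 1 ≤ i) (n : ℕ) (hn : i + 1 ≤ n) :
    (∑' m : ℕ, 2 * (4*c)^m / ∏ t ∈ Finset.range (m+2), ((i + t : ℕ) : ℝ))
      + (∑ j ∈ Finset.Ico i (n-1),
          (∏ k ∈ Finset.Icc (i+1) (j+1), ((k:ℝ)*((k:ℝ)-1)/2) / (2*c*k)) *
            ∑' l : ℕ,
              2 * (4*c)^(j+1+l-i) / ∏ t ∈ Finset.range (j+1+l-i+2), ((i + t : ℕ) : ℝ))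
      = 2 * ∑ k ∈ Finset.Ico i n,
          ∑' j : ℕ, (4*c)^j / ∏ m ∈ Finset.range (j+2), ((k + m : ℕ) : ℝ) := by
  set S : ℕ → ℝ := fun k => ∑' j : ℕ, (4*c)^j / ∏ m ∈ Finset.range (j+2), ((k + m : ℕ) : ℝ)
    with hS
  have h1 : (∑' m : ℕ, 2 * (4*c)^m / ∏ t ∈ Finset.range (m+2), ((i + t : ℕ) : ℝ))
      = 2 * S i := by
    rw [hS, ← tsum_mul_left]
    exact tsum_congr fun m => (mul_div_assoc _ _ _)
  have h2 : ∀ j ∈ Finset.Ico i (n-1),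
      (∏ k ∈ Finset.Icc (i+1) (j+1), ((k:ℝ)*((k:ℝ)-1)/2) / (2*c*k)) *
        ∑' l : ℕ, 2 * (4*c)^(j+1+l-i) / ∏ t ∈ Finset.range (j+1+l-i+2), ((i + t : ℕ) : ℝ)
      = 2 * S (j+1) := by
    intro j hjmem
    rw [Finset.mem_Ico] at hjmem
    exact key c hc i hi j hjmem.1
  rw [h1, Finset.sum_congr rfl h2]
  have h3 : ∑ k ∈ Finset.Ico i n, S k = S i + ∑ j ∈ Finset.Ico i (n-1), S (j+1) := by
    rw [Finset.sum_eq_sum_Ico_succ_bot (by omega : i < n)]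
    congr 1
    rw [Finset.sum_Ico_eq_sum_range, Finset.sum_Ico_eq_sum_range]
    have : n - (i+1) = n - 1 - i := by omega
    rw [this]
    apply Finset.sum_congr rfl
    intro k _
    congr 1
    omega
  rw [h3, mul_add, Finset.mul_sum]
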